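/- Let μ and ν be distinct strict partitions of n, let r be the largest index with μ_r ≠ ν_r (such r exists and r > 1 since |μ| = |ν|), assume μ_r < ν_r, and set m = r + ν_r. Fix pairs of partitions (α,β) and (α′,β′) such that α₁ = α′₁ = 1 and |α| + |β| = |α′| + |β′| = ν_r + (r − 1). If ℓ(α) > ℓ(α′) and the extension of ν by (α,β) equals the extension of ν by (α′,β′), then ℓ(α) ≥ r and ℓ(α′) ≥ r. -/
import Mathlib


/-- `μ : ℕ → ℕ` represents a partition via its parts `μ 1 ≥ μ 2 ≥ ⋯`; the index `0` is
unused and required to be `0`.  The parts are weakly decreasing and only finitely many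
are nonzero. -/
def IsPartition (μ : ℕ → ℕ) : Prop :=
  μ 0 = 0 ∧ (∀ i, 1 ≤ i → μ (i + 1) ≤ μ i) ∧ {i | μ i ≠ 0}.Finite

/-- The weight `|μ|` of a partition: the sum of its parts. -/
noncomputable def pweight (μ : ℕ → ℕ) : ℕ := ∑ᶠ i, μ i

/-- The length `ℓ(μ)`: the number of nonzero parts. -/
noncomputable def plength (μ : ℕ → ℕ) : ℕ := Set.ncard {i | 1 ≤ i ∧ μ i ≠ 0}

/-- A partition is strict if its nonzero parts are pairwise distinct. -/
def IsStrict (μ : ℕ → ℕ) : Prop := ∀ i j, 1 ≤ i → i < j → μ j ≠ 0 → μ j < μ i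

/-- `(i, j)` is a cell of the Ferrers board of `μ`. -/
def Cell (μ : ℕ → ℕ) (i j : ℕ) : Prop := 1 ≤ i ∧ 1 ≤ j ∧ j ≤ μ i

/-- The Ferrers board of `μ` as a set of cells. -/
def Board (μ : ℕ → ℕ) : Set (ℕ × ℕ) := {p | Cell μ p.1 p.2}

/-- The number of ways to place `k` non-attacking rooks on the Ferrers board of `μ`,
i.e. the number of `k`-element subsets of the board whose cells have pairwise distinct
row indices and pairwise distinct column indices. -/
noncomputable def rookCount (μ : ℕ → ℕ) (k : ℕ) : ℕ :=
  Set.ncard {s : Finset (ℕ × ℕ) | s.card = k ∧ (∀ p ∈ s, Cell μ p.1 p.2) ∧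
    ∀ p ∈ s, ∀ q ∈ s, p ≠ q → p.1 ≠ q.1 ∧ p.2 ≠ q.2}

/-- Rook equivalence of partitions. -/
def RookEquiv (μ ν : ℕ → ℕ) : Prop := ∀ k, rookCount μ k = rookCount ν k

/-- `α` contains `μ` as a pattern: there are strictly increasing functions `f, g` on the
positive integers such that `(i, j)` is a cell of `μ` iff `(f i, g j)` is a cell of `α`. -/
def Contains (α μ : ℕ → ℕ) : Prop :=
  ∃ f g : ℕ → ℕ,
    (∀ i, 1 ≤ i → 1 ≤ f i) ∧ (∀ j, 1 ≤ j → 1 ≤ g j) ∧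
    (∀ i j, 1 ≤ i → i < j → f i < f j) ∧
    (∀ i j, 1 ≤ i → i < j → g i < g j) ∧
    (∀ i j, 1 ≤ i → 1 ≤ j → (Cell μ i j ↔ Cell α (f i) (g j)))

/-- `P_n(μ)`: the set of partitions of `n` containing `μ`. -/
def PnSet (n : ℕ) (μ : ℕ → ℕ) : Set (ℕ → ℕ) :=
  {α | IsPartition α ∧ pweight α = n ∧ Contains α μ}

/-- `P_n(μ, k)`: the members of `P_n(μ)` whose first part is `k + μ 1`. -/
def PnSetK (n : ℕ) (μ : ℕ → ℕ) (k : ℕ) : Set (ℕ → ℕ) :=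
  {α | α ∈ PnSet n μ ∧ α 1 = k + μ 1}

/-- Wilf equivalence of partitions. -/
def WilfEquiv (μ ν : ℕ → ℕ) : Prop :=
  ∀ n, 1 ≤ n → (PnSet n μ).ncard = (PnSet n ν).ncard

/-- The multiplicity of `v` among the parts `μ 1, μ 2, …` of `μ`. -/
noncomputable def partCount (μ : ℕ → ℕ) (v : ℕ) : ℕ := Set.ncard {i | 1 ≤ i ∧ μ i = v}

/-- `γ` is the extension of `ν` by the pair `(α, β)`: `γ` is a partition whose multiset of
nonzero parts is the multiset union of the nonzero parts of `ν + α` and those of `β`. -/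
def IsExtension (ν α β γ : ℕ → ℕ) : Prop :=
  IsPartition γ ∧
  ∀ v, 1 ≤ v → partCount γ v = partCount (fun i => ν i + α i) v + partCount β v

/-- `ν` is the `(i, j)`-transform of `μ`: the board of `ν` is obtained from the board of
`μ` by replacing the subboard of cells weakly southeast of `(i, j)` by its conjugate. -/
def IsTransform (i j : ℕ) (μ ν : ℕ → ℕ) : Prop :=
  IsPartition μ ∧ IsPartition ν ∧ 1 ≤ i ∧ 1 ≤ j ∧
  Board ν = (Board μ \ {p ∈ Board μ | i ≤ p.1 ∧ j ≤ p.2}) ∪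
    (fun p : ℕ × ℕ => (i + (p.2 - j), j + (p.1 - i))) '' {p ∈ Board μ | i ≤ p.1 ∧ j ≤ p.2}

/-- One step: `ν` is an `(i, 1)`-transform of `μ` for some `i`. -/
def TransformRel1 (μ ν : ℕ → ℕ) : Prop := ∃ i, IsTransform i 1 μ ν

/-- `(i, 1)`-equivalence: a finite (possibly empty) sequence of `(i, 1)`-transformations. -/
def TransformEquiv1 : (ℕ → ℕ) → (ℕ → ℕ) → Prop := Relation.ReflTransGen TransformRel1

/-- One step: `ν` is an `(i, j)`-transform of `μ` for some `i, j`. -/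
def TransformRel (μ ν : ℕ → ℕ) : Prop := ∃ i j, IsTransform i j μ ν

/-- Differing by a finite sequence of `(i, j)`-transformations. -/
def TransformEquiv : (ℕ → ℕ) → (ℕ → ℕ) → Prop := Relation.ReflTransGen TransformRel

/-- Row `i` of `μ` is salient if `i + μ i ≥ j + μ j` for some `j > i`. -/
def Salient (μ : ℕ → ℕ) (i : ℕ) : Prop := ∃ j, i < j ∧ j + μ j ≤ i + μ i

/-- The multiplicity of `v` in the multiset `S_μ = {i + μ i : row i of μ is salient}`. -/
noncomputable def salientCount (μ : ℕ → ℕ) (v : ℕ) : ℕ :=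
  Set.ncard {i | 1 ≤ i ∧ Salient μ i ∧ i + μ i = v}

/-- The staircase rank of `μ`: the largest `k` with `μ i ≥ k - i + 1` for `1 ≤ i ≤ k`. -/
noncomputable def staircaseRank (μ : ℕ → ℕ) : ℕ :=
  sSup {k | ∀ i, 1 ≤ i → i ≤ k → k + 1 ≤ μ i + i}

/-- The number of cells of the L in `μ` with corner `p = (i, j)`: the cells `(i, x)` of `μ`
with `x ≥ j` together with the cells `(y, j)` with `1 ≤ y ≤ i`. -/
def LWeight (μ : ℕ → ℕ) (p : ℕ × ℕ) : ℕ := (μ p.1 - p.2) + p.1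

/-- `c` lists the corners of a nested sequence of `k` L's in `μ`: each corner is a cell of
`μ`, and later corners are strictly above and strictly to the right of earlier ones. -/
def IsNested (μ : ℕ → ℕ) {k : ℕ} (c : Fin k → ℕ × ℕ) : Prop :=
  (∀ a, Cell μ (c a).1 (c a).2) ∧
  ∀ a b : Fin k, a < b → (c b).1 < (c a).1 ∧ (c a).2 < (c b).2

/-- `w_k(μ)`: the maximum weight of a sequence of `k` nested L's in `μ`
(`0` if there is no such sequence). -/
noncomputable def nestedLMax (μ : ℕ → ℕ) (k : ℕ) : ℕ :=
  sSup {w | ∃ c : Fin k → ℕ × ℕ, IsNested μ c ∧ ∑ a, LWeight μ (c a) = w}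

lemma IsPartition.anti {f : ℕ → ℕ} (h : IsPartition f) {i j : ℕ} (hi : 1 ≤ i) (hij : i ≤ j) :
    f j ≤ f i := by
  induction j, hij using Nat.le_induction with
  | base => exact le_rfl
  | succ n hn ih => exact le_trans (h.2.1 n (le_trans hi hn)) ih

lemma ne_zero_iff_le_plength {f : ℕ → ℕ} (h : IsPartition f) {i : ℕ} (hi : 1 ≤ i) :
    f i ≠ 0 ↔ i ≤ plength f := by
  classical
  have hfin : {j | 1 ≤ j ∧ f j ≠ 0}.Finite := h.2.2.subset (fun x hx => hx.2)
  by_cases hne : {j | 1 ≤ j ∧ f j ≠ 0}.Nonempty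
  · have hne' : hfin.toFinset.Nonempty := by simpa using hne
    set k := hfin.toFinset.max' hne' with hkdef
    have hkmem : k ∈ {j | 1 ≤ j ∧ f j ≠ 0} := by
      have := hfin.toFinset.max'_mem hne'
      simpa using this
    have hle : ∀ x ∈ {j | 1 ≤ j ∧ f j ≠ 0}, x ≤ k := by
      intro x hx
      exact hfin.toFinset.le_max' x (by simpa using hx)
    have hTeq : {j | 1 ≤ j ∧ f j ≠ 0} = Set.Icc 1 k := by
      ext x
      constructor
      · intro hx; exact ⟨hx.1, hle x hx⟩
      · intro hx
        refine ⟨hx.1, ?_⟩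
        have h1 : f k ≤ f x := h.anti hx.1 hx.2
        have h2 := hkmem.2
        omega
    have hplen : plength f = k := by
      rw [plength, hTeq, ← Finset.coe_Icc, Set.ncard_coe_finset, Nat.card_Icc]
      omega
    constructor
    · intro hfi
      rw [hplen]
      exact hle i ⟨hi, hfi⟩
    · intro hik
      rw [hplen] at hik
      have : i ∈ Set.Icc 1 k := ⟨hi, hik⟩
      rw [← hTeq] at this
      exact this.2
  · rw [Set.not_nonempty_iff_eq_empty] at hne
    have hplen : plength f = 0 := by rw [plength, hne]; simp
    constructor
    · intro hfi
      exact absurd (Set.eq_empty_iff_forall_notMem.mp hne i) (by simp [hi, hfi])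
    · intro hik
      exfalso
      rw [hplen] at hik
      omega

theorem lengths_at_least_r (n r m : ℕ) (μ ν : ℕ → ℕ)
    (hμ : IsPartition μ) (hν : IsPartition ν)
    (hμs : IsStrict μ) (hνs : IsStrict ν)
    (hμn : pweight μ = n) (hνn : pweight ν = n) (hne : μ ≠ ν)
    (hr : μ r ≠ ν r) (hrmax : ∀ j, r < j → μ j = ν j)
    (hlt : μ r < ν r) (hm : m = r + ν r)
    (α β α' β' γ : ℕ → ℕ)
    (hα : IsPartition α) (hβ : IsPartition β)
    (hα' : IsPartition α') (hβ' : IsPartition β')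
    (hk : α 1 = 1) (hk' : α' 1 = 1)
    (hw : pweight α + pweight β = ν r + (r - 1))
    (hw' : pweight α' + pweight β' = ν r + (r - 1))
    (h : IsExtension ν α β γ) (h' : IsExtension ν α' β' γ)
    (hll : plength α' < plength α) :
    r ≤ plength α ∧ r ≤ plength α' := by
  classical
  have hr1 : 1 ≤ r := by
    by_contra hcon
    have hr0 : r = 0 := by omega
    rw [hr0, hμ.1, hν.1] at hr
    exact hr rfl
  have hνr1 : 1 ≤ ν r := by omega
  -- lower bound on the parts of ν above row r
  have hνlb : ∀ d, d ≤ r - 1 → ν r + d ≤ ν (r - d) := by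
    intro d
    induction d with
    | zero => intro _; simp
    | succ dd ih =>
      intro hd
      have h1 := ih (by omega)
      have h2 : ν (r - dd) < ν (r - (dd + 1)) :=
        hνs (r - (dd + 1)) (r - dd) (by omega) (by omega) (by omega)
      omega
  -- parts of α and α' are at most 1
  have hαle : ∀ i, 1 ≤ i → α i ≤ 1 := by
    intro i hi
    have := hα.anti (le_refl 1) hi
    omega
  have hα'le : ∀ i, 1 ≤ i → α' i ≤ 1 := by
    intro i hi
    have := hα'.anti (le_refl 1) hi
    omega
  have ha'1 : 1 ≤ plength α' :=
    (ne_zero_iff_le_plength hα' le_rfl).mp (by omega)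
  -- main claim : r ≤ plength α'
  have hmain : r ≤ plength α' := by
    by_contra hcon
    push_neg at hcon
    have hi0r : plength α' + 1 ≤ r := by omega
    have hνi0 : ν r + (r - (plength α' + 1)) ≤ ν (plength α' + 1) := by
      have := hνlb (r - (plength α' + 1)) (by omega)
      rwa [show r - (r - (plength α' + 1)) = plength α' + 1 by omega] at this
    have hνi0pos : 1 ≤ ν (plength α' + 1) := by omega
    -- the value v
    have hαi0 : α (plength α' + 1) = 1 := by
      have h1 : α (plength α' + 1) ≠ 0 :=
        (ne_zero_iff_le_plength hα (by omega)).mpr (by omega)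
      have h2 := hαle (plength α' + 1) (by omega)
      omega
    have hfinA : {i | 1 ≤ i ∧ (fun i => ν i + α i) i = ν (plength α' + 1) + 1}.Finite := by
      apply (hν.2.2.union hα.2.2).subset
      intro x hx
      simp only [Set.mem_setOf_eq] at hx
      simp only [Set.mem_union, Set.mem_setOf_eq]
      omega
    have hA : 1 ≤ partCount (fun i => ν i + α i) (ν (plength α' + 1) + 1) := by
      have hmem : (plength α' + 1) ∈
          {i | 1 ≤ i ∧ (fun i => ν i + α i) i = ν (plength α' + 1) + 1} := by
        simp only [Set.mem_setOf_eq]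
        omega
      have := (Set.ncard_pos hfinA).mpr ⟨_, hmem⟩
      unfold partCount
      omega
    have hB : partCount (fun i => ν i + α' i) (ν (plength α' + 1) + 1) = 0 := by
      unfold partCount
      have hempty : {i | 1 ≤ i ∧ (fun i => ν i + α' i) i = ν (plength α' + 1) + 1}
          = (∅ : Set ℕ) := by
        ext x
        simp only [Set.mem_setOf_eq, Set.mem_empty_iff_false, iff_false, not_and]
        intro hx1 hx2
        by_cases hxa : x ≤ plength α'
        · have hα'x : α' x = 1 := by
            have h1 : α' x ≠ 0 := (ne_zero_iff_le_plength hα' hx1).mpr hxa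
            have h2 := hα'le x hx1
            omega
          have : ν (plength α' + 1) < ν x :=
            hνs x (plength α' + 1) hx1 (by omega) (by omega)
          omega
        · have hα'x : α' x = 0 := by
            by_contra hc
            exact hxa ((ne_zero_iff_le_plength hα' hx1).mp hc)
          rcases Nat.lt_or_ge (plength α' + 1) x with hgt | hle2
          · have : ν x ≤ ν (plength α' + 1) := hν.anti (by omega) (le_of_lt hgt)
            omega
          · have hxeq : x = plength α' + 1 := by omega
            rw [hxeq] at hx2 hα'x
            omega
      rw [hempty]
      simp
    have hh := h.2 (ν (plength α' + 1) + 1) (by omega)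
    have hh' := h'.2 (ν (plength α' + 1) + 1) (by omega)
    have hβ'pos : 1 ≤ partCount β' (ν (plength α' + 1) + 1) := by omega
    have hneB' : {i | 1 ≤ i ∧ β' i = ν (plength α' + 1) + 1}.Nonempty := by
      apply Set.nonempty_of_ncard_ne_zero
      unfold partCount at hβ'pos
      omega
    obtain ⟨i1, hi11, hi1v⟩ := hneB'
    have hwt : ν (plength α' + 1) + 1 ≤ pweight β' := by
      rw [pweight, ← hi1v]
      exact single_le_finsum i1 hβ'.2.2 (fun j => Nat.zero_le _)
    have hwα' : pweight α' = plength α' := by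
      have hsub : Function.support α' ⊆ (Finset.Icc 1 (plength α') : Finset ℕ) := by
        intro x hx
        simp only [Function.mem_support] at hx
        have hx1 : 1 ≤ x := by
          by_contra hc
          have hx0 : x = 0 := by omega
          rw [hx0, hα'.1] at hx
          exact hx rfl
        simp only [Finset.coe_Icc, Set.mem_Icc]
        exact ⟨hx1, (ne_zero_iff_le_plength hα' hx1).mp hx⟩
      rw [pweight, finsum_eq_sum_of_support_subset α' hsub]
      have hone : ∀ x ∈ Finset.Icc 1 (plength α'), α' x = 1 := by
        intro x hx
        simp only [Finset.mem_Icc] at hx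
        have h1 : α' x ≠ 0 := (ne_zero_iff_le_plength hα' hx.1).mpr hx.2
        have h2 := hα'le x hx.1
        omega
      rw [Finset.sum_congr rfl hone, Finset.sum_const, smul_eq_mul, mul_one, Nat.card_Icc]
      omega
    rw [hwα'] at hw'
    omega
  exact ⟨by omega, hmain⟩
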